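/- (Theorem 1) For the star-graph quantum walk with M ≥ 2 edges started in the diagonal initial state, let λ_M = arccos((M−1)/M) and let t_M = ⌊π/(2·λ_M)⌋ be the integer hitting time. Then the probability of measuring the marked edge at time t_M, namely p_{t_M} = |ψ⁺ 0 (t_M)|² + |ψ⁻ 0 (t_M)|², tends to 1 as M → ∞, and t_M/√M → π/(2√2); i.e., the walk finds the marked edge with probability 1 − o(1) after O(√M) steps. -/

import Mathlib

open Filter

/-!
Star-graph quantum walk with `M` edges (edges indexed by `0, …, M−1`; edge `0` is marked).
The walker's state is a pair of amplitude vectors `ψ⁺ ψ⁻` (indexed by the edges); one step is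
`U = S ∘ C ∘ O` where the oracle `O` maps `(ψ⁺ 0, ψ⁻ 0)` to `(−ψ⁻ 0, −ψ⁺ 0)` and fixes the
other entries, the coin `C` swaps `ψ⁺ i` and `ψ⁻ i` for every `i`, and the scattering `S`
replaces `ψ⁺` by `D_M ψ⁺` with `D_M = (2/M) J_M − I_M`, fixing `ψ⁻`.
-/

/-- One step `U = S ∘ C ∘ O` of the star-graph quantum walk with `M` edges
(amplitudes indexed by `ℕ`; only the indices `< M` are relevant). -/
noncomputable def starStep (M : ℕ) (ψ : (ℕ → ℂ) × (ℕ → ℂ)) : (ℕ → ℂ) × (ℕ → ℂ) :=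
  -- oracle
  let Op : ℕ → ℂ := Function.update ψ.1 0 (-ψ.2 0)
  let Om : ℕ → ℂ := Function.update ψ.2 0 (-ψ.1 0)
  -- coin swaps the two components, then scattering applies `D_M` to the `+` component
  (fun i => ∑ j ∈ Finset.range M, ((2 / (M : ℂ)) - if i = j then 1 else 0) * Om j, Op)

/-- The diagonal initial state `ψ⁺ i = ψ⁻ i = 1/√(2M)`. -/
noncomputable def starInit (M : ℕ) : (ℕ → ℂ) × (ℕ → ℂ) :=
  (fun _ => ((1 / Real.sqrt (2 * M) : ℝ) : ℂ), fun _ => ((1 / Real.sqrt (2 * M) : ℝ) : ℂ))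

/-- The success probability at time `t`: `p_t = |ψ⁺ 0 (t)|² + |ψ⁻ 0 (t)|²`. -/
noncomputable def starProb (M t : ℕ) : ℝ :=
  ‖((starStep M)^[t] (starInit M)).1 0‖ ^ 2 +
    ‖((starStep M)^[t] (starInit M)).2 0‖ ^ 2

/-- `λ_M = arccos((M−1)/M)`. -/
noncomputable def starLam (M : ℕ) : ℝ :=
  Real.arccos (((M : ℝ) - 1) / M)

/-- The integer hitting time `t_M = ⌊π/(2 λ_M)⌋`. -/
noncomputable def starHit (M : ℕ) : ℕ :=
  ⌊Real.pi / (2 * starLam M)⌋₊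

namespace StarAux

/-- `1/√(2M)`. -/
noncomputable def sA (M : ℕ) : ℝ := 1 / Real.sqrt (2 * M)

/-- Closed form for `ψ⁺ 0` at time `t`. -/
noncomputable def Af (M t : ℕ) : ℝ :=
  sA M * ((2 * (M : ℝ) - 2) / (2 * M - 1) * Real.cos (starLam M * t)
    + (2 * (M : ℝ) - 2) / Real.sqrt (2 * M - 1) * Real.sin (starLam M * t)
    + (-1 : ℝ) ^ t / (2 * M - 1))

/-- Closed form for `ψ⁻ i`, `i ≠ 0`, at time `t`. -/
noncomputable def Df (M t : ℕ) : ℝ :=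
  sA M * ((2 * (M : ℝ)) / (2 * M - 1) * Real.cos (starLam M * t)
    - (-1 : ℝ) ^ t / (2 * M - 1))

variable {M : ℕ}

lemma Mge2 (hM : 2 ≤ M) : (2 : ℝ) ≤ M := by exact_mod_cast hM

lemma Mpos (hM : 2 ≤ M) : (0 : ℝ) < M := by have := Mge2 hM; linarith

lemma h2M1 (hM : 2 ≤ M) : (0 : ℝ) < 2 * M - 1 := by
  have := Mge2 hM; linarith

lemma cos_lam (hM : 2 ≤ M) : Real.cos (starLam M) = ((M : ℝ) - 1) / M := by
  have hMpos := Mpos hM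
  have h2 := Mge2 hM
  apply Real.cos_arccos
  · rw [le_div_iff₀ hMpos]; linarith
  · rw [div_le_one hMpos]; linarith

lemma sin_lam (hM : 2 ≤ M) : Real.sin (starLam M) = Real.sqrt (2 * M - 1) / M := by
  have hMpos := Mpos hM
  rw [starLam, Real.sin_arccos]
  have h1 : 1 - (((M : ℝ) - 1) / M) ^ 2 = (2 * M - 1) / M ^ 2 := by
    field_simp; ring
  rw [h1, Real.sqrt_div (by have := Mge2 hM; linarith), Real.sqrt_sq hMpos.le]

lemma idA (hM : 2 ≤ M) (t : ℕ) :
    (2 / (M : ℝ)) * (-(Af M t) + ((M : ℝ) - 1) * Df M t) + Af M t = Af M (t + 1) := by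
  have hMpos := Mpos hM
  have h1 := h2M1 hM
  unfold Af Df
  set σ := Real.sqrt (2 * (M : ℝ) - 1) with hσ
  have hσpos : 0 < σ := Real.sqrt_pos.mpr h1
  have hσsq : σ ^ 2 = 2 * (M : ℝ) - 1 := Real.sq_sqrt h1.le
  have harg : starLam M * ((t + 1 : ℕ) : ℝ) = starLam M * t + starLam M := by push_cast; ring
  rw [harg, Real.cos_add, Real.sin_add, cos_lam hM, sin_lam hM, ← hσ, pow_succ]
  field_simp
  have hσ3 : σ ^ 3 = (2 * (M : ℝ) - 1) * σ := by rw [pow_succ, hσsq]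
  have hσ4 : σ ^ 4 = (2 * (M : ℝ) - 1) ^ 2 := by rw [show σ ^ 4 = (σ ^ 2) ^ 2 by ring, hσsq]
  ring_nf
  simp only [hσ4, hσ3, hσsq]
  ring

lemma idD (hM : 2 ≤ M) (t : ℕ) :
    (2 / (M : ℝ)) * (-(Af M t) + ((M : ℝ) - 1) * Df M t) - Df M t = Df M (t + 2) := by
  have hMpos := Mpos hM
  have h1 := h2M1 hM
  unfold Af Df
  set σ := Real.sqrt (2 * (M : ℝ) - 1) with hσ
  have hσpos : 0 < σ := Real.sqrt_pos.mpr h1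
  have hσsq : σ ^ 2 = 2 * (M : ℝ) - 1 := Real.sq_sqrt h1.le
  have harg : starLam M * ((t + 2 : ℕ) : ℝ) = starLam M * t + starLam M + starLam M := by
    push_cast; ring
  have hpow : ((-1 : ℝ)) ^ (t + 2) = (-1) ^ t := by rw [pow_add]; norm_num
  rw [harg, Real.cos_add, Real.sin_add, Real.cos_add, cos_lam hM, sin_lam hM,
    ← hσ, hpow]
  field_simp
  have hσ3 : σ ^ 3 = (2 * (M : ℝ) - 1) * σ := by rw [pow_succ, hσsq]
  have hσ4 : σ ^ 4 = (2 * (M : ℝ) - 1) ^ 2 := by rw [show σ ^ 4 = (σ ^ 2) ^ 2 by ring, hσsq]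
  ring_nf
  simp only [hσ4, hσ3, hσsq]
  ring


lemma Af_zero (hM : 2 ≤ M) : Af M 0 = sA M := by
  have h1 := h2M1 hM
  unfold Af
  push_cast
  rw [mul_zero, Real.cos_zero, Real.sin_zero, pow_zero]
  field_simp
  ring

lemma Df_zero (hM : 2 ≤ M) : Df M 0 = sA M := by
  have h1 := h2M1 hM
  unfold Df
  push_cast
  rw [mul_zero, Real.cos_zero, pow_zero]
  field_simp

lemma Df_one (hM : 2 ≤ M) : Df M 1 = sA M := by
  have h1 := h2M1 hM
  have hMpos := Mpos hM
  unfold Df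
  push_cast
  rw [mul_one, cos_lam hM, pow_one]
  field_simp
  ring

lemma starStep_fst (M : ℕ) (ψ : (ℕ → ℂ) × (ℕ → ℂ)) (i : ℕ) :
    (starStep M ψ).1 i = ∑ j ∈ Finset.range M,
      ((2 / (M : ℂ)) - if i = j then 1 else 0) * (Function.update ψ.2 0 (-ψ.1 0)) j := rfl

lemma starStep_snd (M : ℕ) (ψ : (ℕ → ℂ) × (ℕ → ℂ)) (i : ℕ) :
    (starStep M ψ).2 i = Function.update ψ.1 0 (-ψ.2 0) i := rfl

lemma sum_eval (hM : 0 < M) {i : ℕ} (hi : i < M) (x d : ℂ) :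
    ∑ j ∈ Finset.range M, ((2 / (M : ℂ)) - if i = j then 1 else 0) * (if j = 0 then x else d)
      = (2 / (M : ℂ)) * (x + ((M : ℂ) - 1) * d) - (if i = 0 then x else d) := by
  have h0 : (0 : ℕ) ∈ Finset.range M := Finset.mem_range.mpr hM
  have hi' : i ∈ Finset.range M := Finset.mem_range.mpr hi
  simp only [sub_mul]
  rw [Finset.sum_sub_distrib]
  have e1 : ∑ j ∈ Finset.range M, (2 / (M : ℂ)) * (if j = 0 then x else d)
      = (2 / (M : ℂ)) * (x + ((M : ℂ) - 1) * d) := by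
    rw [← Finset.mul_sum]
    congr 1
    have h : ∀ j : ℕ, (if j = 0 then x else d) = (if j = 0 then x - d else 0) + d := by
      intro j; split <;> ring
    simp_rw [h]
    rw [Finset.sum_add_distrib, Finset.sum_ite_eq' (Finset.range M) 0 (fun _ => x - d),
      if_pos h0, Finset.sum_const, Finset.card_range, nsmul_eq_mul]
    ring
  have e2 : ∑ j ∈ Finset.range M, (if i = j then (1 : ℂ) else 0) * (if j = 0 then x else d)
      = (if i = 0 then x else d) := by
    have h : ∀ j : ℕ, ((if i = j then (1 : ℂ) else 0) * (if j = 0 then x else d))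
        = if i = j then (if j = 0 then x else d) else 0 := by
      intro j; split <;> simp
    simp_rw [h]
    rw [Finset.sum_ite_eq (Finset.range M) i, if_pos hi']
  rw [e1, e2]
  ring_nf

lemma invariant (hM : 2 ≤ M) (t : ℕ) :
    (∀ i, i < M → ((starStep M)^[t] (starInit M)).1 i
        = if i = 0 then ((Af M t : ℝ) : ℂ) else ((Df M (t + 1) : ℝ) : ℂ))
    ∧ (∀ i, i < M → ((starStep M)^[t] (starInit M)).2 i
        = if i = 0 then (((-1 : ℝ) ^ t * sA M : ℝ) : ℂ) else ((Df M t : ℝ) : ℂ)) := by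
  have hM0 : 0 < M := Nat.lt_of_lt_of_le two_pos hM
  induction t with
  | zero =>
    constructor <;> intro i hi <;>
      simp only [Function.iterate_zero, id_eq, starInit, Af_zero hM, Df_zero hM, Df_one hM,
        pow_zero, one_mul] <;> split <;> rfl
  | succ t ih =>
    obtain ⟨ih1, ih2⟩ := ih
    set ψ := (starStep M)^[t] (starInit M) with hψ
    rw [Function.iterate_succ_apply']
    have hOm : ∀ j ∈ Finset.range M, Function.update ψ.2 0 (-ψ.1 0) j
        = if j = 0 then (((-(Af M t)) : ℝ) : ℂ) else ((Df M t : ℝ) : ℂ) := by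
      intro j hj
      rcases eq_or_ne j 0 with rfl | hj0
      · rw [Function.update_self, ih1 0 hM0, if_pos rfl, if_pos rfl]
        push_cast; ring
      · rw [Function.update_of_ne hj0, if_neg hj0, ih2 j (Finset.mem_range.mp hj), if_neg hj0]
    constructor
    · intro i hi
      rw [starStep_fst, Finset.sum_congr rfl (fun j hj => by rw [hOm j hj]),
        sum_eval hM0 hi]
      rcases eq_or_ne i 0 with rfl | hi0
      · rw [if_pos rfl, if_pos rfl]
        have h : (2 / (M : ℝ)) * (-(Af M t) + ((M : ℝ) - 1) * Df M t) - (-(Af M t))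
            = Af M (t + 1) := by have := idA hM t; linarith
        have h' := congrArg (fun r : ℝ => (r : ℂ)) h
        push_cast at h' ⊢
        exact h'
      · rw [if_neg hi0, if_neg hi0]
        have h : (2 / (M : ℝ)) * (-(Af M t) + ((M : ℝ) - 1) * Df M t) - Df M t
            = Df M (t + 1 + 1) := idD hM t
        have h' := congrArg (fun r : ℝ => (r : ℂ)) h
        push_cast at h' ⊢
        exact h'
    · intro i hi
      rw [starStep_snd]
      rcases eq_or_ne i 0 with rfl | hi0
      · rw [Function.update_self, if_pos rfl, ih2 0 hM0, if_pos rfl]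
        push_cast
        ring
      · rw [Function.update_of_ne hi0, if_neg hi0, ih1 i hi, if_neg hi0]


lemma starProb_eq (hM : 2 ≤ M) (t : ℕ) :
    starProb M t = Af M t ^ 2 + sA M ^ 2 := by
  have hM0 : 0 < M := Nat.lt_of_lt_of_le two_pos hM
  obtain ⟨h1, h2⟩ := invariant hM t
  rw [starProb, h1 0 hM0, h2 0 hM0, if_pos rfl, if_pos rfl, Complex.norm_real,
    Complex.norm_real, Real.norm_eq_abs, Real.norm_eq_abs, sq_abs, sq_abs]
  have h3 : ((-1 : ℝ) ^ t * sA M) ^ 2 = sA M ^ 2 := by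
    rw [mul_pow, ← pow_mul, mul_comm t 2, pow_mul]
    norm_num
  rw [h3]

lemma sA_nonneg : 0 ≤ sA M := by unfold sA; positivity

lemma oneDivM : Tendsto (fun M : ℕ => 1 / (M : ℝ)) atTop (nhds 0) :=
  tendsto_one_div_atTop_nhds_zero_nat

lemma sA_tendsto : Tendsto (fun M : ℕ => sA M) atTop (nhds 0) := by
  have h : Tendsto (fun M : ℕ => 1 / (2 * (M : ℝ))) atTop (nhds 0) := by
    have := oneDivM.div_const 2
    rw [zero_div] at this
    apply this.congr
    intro M
    rw [div_div]
    ring_nf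
  have h2 := (Real.continuous_sqrt.tendsto 0).comp h
  rw [Real.sqrt_zero] at h2
  apply h2.congr
  intro M
  simp only [Function.comp_apply, sA, one_div, Real.sqrt_inv]

lemma lam_pos (hM : 2 ≤ M) : 0 < starLam M := by
  have hMpos := Mpos hM
  rw [starLam, Real.arccos_pos, div_lt_one hMpos]
  linarith

lemma lam_le (hM : 2 ≤ M) : starLam M ≤ Real.pi / 2 := by
  have hMpos := Mpos hM
  have h2 := Mge2 hM
  rw [starLam, Real.arccos_le_pi_div_two]
  apply div_nonneg (by linarith) hMpos.le

lemma lam_tendsto : Tendsto (fun M : ℕ => starLam M) atTop (nhds 0) := by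
  have hin : Tendsto (fun M : ℕ => ((M : ℝ) - 1) / M) atTop (nhds 1) := by
    have h : Tendsto (fun M : ℕ => 1 - 1 / (M : ℝ)) atTop (nhds (1 - 0)) :=
      tendsto_const_nhds.sub oneDivM
    rw [sub_zero] at h
    apply h.congr'
    filter_upwards [eventually_ge_atTop 1] with M hM
    have hMne : (M : ℝ) ≠ 0 := by
      have : (1 : ℝ) ≤ M := by exact_mod_cast hM
      linarith
    field_simp
  have h := (Real.continuous_arccos.tendsto 1).comp hin
  rw [Real.arccos_one] at h
  exact h

lemma theta_le (hM : 2 ≤ M) : starLam M * (starHit M : ℝ) ≤ Real.pi / 2 := by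
  have hl := lam_pos hM
  have h1 : (starHit M : ℝ) ≤ Real.pi / (2 * starLam M) :=
    Nat.floor_le (by positivity)
  have h2 := mul_le_mul_of_nonneg_left h1 hl.le
  have h3 : starLam M * (Real.pi / (2 * starLam M)) = Real.pi / 2 := by
    field_simp
  linarith
lemma theta_gt (hM : 2 ≤ M) : Real.pi / 2 - starLam M < starLam M * (starHit M : ℝ) := by
  have hl := lam_pos hM
  have h1 : Real.pi / (2 * starLam M) < (starHit M : ℝ) + 1 := Nat.lt_floor_add_one _
  have h2 := (mul_lt_mul_iff_right₀ hl).mpr h1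
  have h3 : starLam M * (Real.pi / (2 * starLam M)) = Real.pi / 2 := by
    field_simp
  rw [h3, mul_add, mul_one] at h2
  linarith

lemma theta_tendsto :
    Tendsto (fun M : ℕ => starLam M * (starHit M : ℝ)) atTop (nhds (Real.pi / 2)) := by
  apply tendsto_of_tendsto_of_tendsto_of_le_of_le'
    (g := fun M : ℕ => Real.pi / 2 - starLam M) (h := fun _ : ℕ => Real.pi / 2)
  · have h : Tendsto (fun M : ℕ => Real.pi / 2 - starLam M) atTop (nhds (Real.pi / 2 - 0)) :=
      tendsto_const_nhds.sub lam_tendsto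
    rw [sub_zero] at h
    exact h
  · exact tendsto_const_nhds
  · filter_upwards [eventually_ge_atTop 2] with M hM
    exact (theta_gt hM).le
  · filter_upwards [eventually_ge_atTop 2] with M hM
    exact theta_le hM

lemma sin_theta_tendsto :
    Tendsto (fun M : ℕ => Real.sin (starLam M * (starHit M : ℝ))) atTop (nhds 1) := by
  have h := (Real.continuous_sin.tendsto (Real.pi / 2)).comp theta_tendsto
  rw [Real.sin_pi_div_two] at h
  exact h

lemma cos_theta_tendsto :
    Tendsto (fun M : ℕ => Real.cos (starLam M * (starHit M : ℝ))) atTop (nhds 0) := by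
  have h := (Real.continuous_cos.tendsto (Real.pi / 2)).comp theta_tendsto
  rw [Real.cos_pi_div_two] at h
  exact h

lemma P_tendsto : Tendsto (fun M : ℕ => (2 * (M : ℝ) - 2) / (2 * M - 1)) atTop (nhds 1) := by
  have h2m1 : Tendsto (fun M : ℕ => 2 * (M : ℝ) - 1) atTop atTop := by
    have h := tendsto_atTop_add_const_right atTop (-1 : ℝ)
      ((tendsto_natCast_atTop_atTop (R := ℝ)).const_mul_atTop two_pos)
    apply h.congr
    intro M
    ring
  have hinv := h2m1.inv_tendsto_atTop
  have h : Tendsto (fun M : ℕ => 1 - (2 * (M : ℝ) - 1)⁻¹) atTop (nhds (1 - 0)) :=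
    tendsto_const_nhds.sub hinv
  rw [sub_zero] at h
  apply h.congr'
  filter_upwards [eventually_ge_atTop 1] with M hM
  have h1 : (1 : ℝ) ≤ M := by exact_mod_cast hM
  have hne : 2 * (M : ℝ) - 1 ≠ 0 := by linarith
  field_simp
  ring

lemma K_tendsto :
    Tendsto (fun M : ℕ => sA M * ((2 * (M : ℝ) - 2) / Real.sqrt (2 * M - 1))) atTop (nhds 1) := by
  have hinvM : Tendsto (fun M : ℕ => ((M : ℝ))⁻¹) atTop (nhds 0) := by
    simpa only [one_div] using oneDivM
  have hr : Tendsto (fun M : ℕ => (2 * (M : ℝ) - 2) ^ 2 / ((2 * M) * (2 * M - 1))) atTop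
      (nhds 1) := by
    have hnum : Tendsto (fun M : ℕ => (2 - 2 * ((M : ℝ))⁻¹) ^ 2) atTop
        (nhds ((2 - 2 * 0) ^ 2)) :=
      (tendsto_const_nhds.sub (hinvM.const_mul 2)).pow 2
    have hden : Tendsto (fun M : ℕ => 2 * (2 - ((M : ℝ))⁻¹)) atTop (nhds (2 * (2 - 0))) :=
      (tendsto_const_nhds.sub hinvM).const_mul 2
    have h := hnum.div hden (by norm_num)
    have hv : ((2 : ℝ) - 2 * 0) ^ 2 / (2 * (2 - 0)) = 1 := by norm_num
    rw [hv] at h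
    apply h.congr'
    filter_upwards [eventually_ge_atTop 1] with M hM
    have h1 : (1 : ℝ) ≤ M := by exact_mod_cast hM
    have hne : (M : ℝ) ≠ 0 := by linarith
    show (2 - 2 * ((M : ℝ))⁻¹) ^ 2 / (2 * (2 - ((M : ℝ))⁻¹))
        = (2 * (M : ℝ) - 2) ^ 2 / ((2 * M) * (2 * M - 1))
    have h0M : (0 : ℝ) < M := by linarith
    have hia : (M : ℝ)⁻¹ ≤ 1 := by
      rw [inv_le_one_iff₀]
      right; exact h1
    have hib : (0 : ℝ) < (M : ℝ)⁻¹ := inv_pos.mpr h0M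
    rw [div_eq_div_iff (by nlinarith) (by nlinarith)]
    field_simp
  have hsq := (Real.continuous_sqrt.tendsto 1).comp hr
  rw [Real.sqrt_one] at hsq
  apply hsq.congr'
  filter_upwards [eventually_ge_atTop 2] with M hM
  have h2 := Mge2 hM
  have hMpos := Mpos hM
  simp only [Function.comp_apply]
  rw [Real.sqrt_div (by positivity), Real.sqrt_mul (by positivity),
    Real.sqrt_sq (by linarith)]
  unfold sA
  have ha : Real.sqrt (2 * (M : ℝ)) ≠ 0 := by positivity
  have hb : Real.sqrt (2 * (M : ℝ) - 1) ≠ 0 := by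
    apply ne_of_gt
    apply Real.sqrt_pos.mpr
    linarith
  field_simp

lemma Af_tendsto : Tendsto (fun M : ℕ => Af M (starHit M)) atTop (nhds 1) := by
  have t1 : Tendsto (fun M : ℕ =>
      (sA M * ((2 * (M : ℝ) - 2) / (2 * M - 1))) * Real.cos (starLam M * (starHit M : ℝ)))
      atTop (nhds 0) := by
    have h := (sA_tendsto.mul P_tendsto).mul cos_theta_tendsto
    norm_num at h
    exact h
  have t2 : Tendsto (fun M : ℕ =>
      (sA M * ((2 * (M : ℝ) - 2) / Real.sqrt (2 * M - 1))) *
        Real.sin (starLam M * (starHit M : ℝ))) atTop (nhds 1) := by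
    have h := K_tendsto.mul sin_theta_tendsto
    norm_num at h
    exact h
  have t3 : Tendsto (fun M : ℕ => sA M * ((-1 : ℝ) ^ (starHit M) / (2 * M - 1))) atTop
      (nhds 0) := by
    apply squeeze_zero_norm' ?_ sA_tendsto
    filter_upwards [eventually_ge_atTop 1] with M hM
    have h1 : (1 : ℝ) ≤ M := by exact_mod_cast hM
    have h2 : (1 : ℝ) ≤ 2 * (M : ℝ) - 1 := by linarith
    rw [Real.norm_eq_abs, abs_mul, abs_div, abs_pow, abs_neg, abs_one, one_pow,
      abs_of_nonneg (sA_nonneg (M := M)), abs_of_nonneg (by linarith : (0:ℝ) ≤ 2 * (M:ℝ) - 1)]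
    have h3 : 1 / (2 * (M : ℝ) - 1) ≤ 1 := by
      rw [div_le_one (by linarith)]
      linarith
    calc sA M * (1 / (2 * (M : ℝ) - 1)) ≤ sA M * 1 :=
          mul_le_mul_of_nonneg_left h3 sA_nonneg
      _ = sA M := mul_one _
  have h := (t1.add t2).add t3
  norm_num at h
  apply h.congr
  intro M
  unfold Af
  ring

lemma prob_tendsto : Tendsto (fun M : ℕ => starProb M (starHit M)) atTop (nhds 1) := by
  have h2 : Tendsto (fun M : ℕ => Af M (starHit M) ^ 2 + sA M ^ 2) atTop (nhds 1) := by
    have h := (Af_tendsto.pow 2).add (sA_tendsto.pow 2)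
    norm_num at h
    exact h
  apply h2.congr'
  filter_upwards [eventually_ge_atTop 2] with M hM
  exact (starProb_eq hM _).symm

lemma sin_half (hM : 2 ≤ M) : Real.sin (starLam M / 2) = sA M := by
  have h0 : (0 : ℝ) ≤ starLam M := Real.arccos_nonneg _
  have hpi : starLam M ≤ 2 * Real.pi := by
    have := Real.arccos_le_pi (((M : ℝ) - 1) / M)
    have hp := Real.pi_pos
    rw [starLam]
    linarith
  have hMpos := Mpos hM
  rw [Real.sin_half_eq_sqrt h0 hpi, cos_lam hM]
  have h1 : (1 - ((M : ℝ) - 1) / M) / 2 = (2 * (M : ℝ))⁻¹ := by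
    field_simp
    ring
  rw [h1, Real.sqrt_inv, sA, one_div]

lemma ratio_tendsto :
    Tendsto (fun M : ℕ => Real.sin (starLam M / 2) / (starLam M / 2)) atTop (nhds 1) := by
  apply tendsto_of_tendsto_of_tendsto_of_le_of_le'
    (g := fun M : ℕ => 1 - (starLam M / 2) ^ 2 / 4) (h := fun _ : ℕ => (1 : ℝ))
  · have h1 : Tendsto (fun M : ℕ => (starLam M / 2) ^ 2 / 4) atTop (nhds ((0 / 2) ^ 2 / 4)) :=
      ((lam_tendsto.div_const 2).pow 2).div_const 4
    have h2 : Tendsto (fun M : ℕ => 1 - (starLam M / 2) ^ 2 / 4) atTop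
        (nhds (1 - (0 / 2) ^ 2 / 4)) := tendsto_const_nhds.sub h1
    norm_num at h2
    exact h2
  · exact tendsto_const_nhds
  · filter_upwards [eventually_ge_atTop 2] with M hM
    have hx0 : 0 < starLam M / 2 := by linarith [lam_pos hM]
    have hx1 : starLam M / 2 ≤ 1 := by
      have := lam_le hM
      have hp4 := Real.pi_le_four
      linarith
    have hcube := Real.sin_gt_sub_cube hx0
    rw [le_div_iff₀ hx0]
    nlinarith
  · filter_upwards [eventually_ge_atTop 2] with M hM
    have hx0 : 0 < starLam M / 2 := by linarith [lam_pos hM]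
    rw [div_le_one hx0]
    exact (Real.sin_lt hx0).le

lemma hit_tendsto :
    Tendsto (fun M : ℕ => (starHit M : ℝ) / Real.sqrt M) atTop
      (nhds (Real.pi / (2 * Real.sqrt 2))) := by
  have hcomp : Tendsto (fun M : ℕ => Real.sqrt 2 *
      ((starLam M * (starHit M : ℝ)) / 2 * (Real.sin (starLam M / 2) / (starLam M / 2))))
      atTop (nhds (Real.sqrt 2 * ((Real.pi / 2) / 2 * 1))) :=
    ((theta_tendsto.div_const 2).mul ratio_tendsto).const_mul _
  have h2 : Real.sqrt 2 * Real.sqrt 2 = 2 := Real.mul_self_sqrt (by norm_num)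
  have hne : Real.sqrt 2 ≠ 0 := by positivity
  have h2' : Real.sqrt 2 ^ 2 = 2 := Real.sq_sqrt (by norm_num)
  have heq : Real.sqrt 2 * ((Real.pi / 2) / 2 * 1) = Real.pi / (2 * Real.sqrt 2) := by
    field_simp
    linear_combination h2'
  rw [heq] at hcomp
  apply hcomp.congr'
  filter_upwards [eventually_ge_atTop 2] with M hM
  rw [sin_half hM]
  have hl := (lam_pos hM).ne'
  have hM0 := Mpos hM
  have hsqM : (0 : ℝ) < Real.sqrt M := Real.sqrt_pos.mpr hM0
  have h2M : Real.sqrt (2 * (M : ℝ)) = Real.sqrt 2 * Real.sqrt M :=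
    Real.sqrt_mul (by norm_num) _
  unfold sA
  rw [h2M]
  field_simp

end StarAux

/-- (Theorem 1) The star-graph quantum walk started in the diagonal state finds the marked
edge with probability `1 − o(1)` after `O(√M)` steps: the probability `p_{t_M}` of measuring
the marked edge at the hitting time `t_M = ⌊π/(2 λ_M)⌋` tends to `1` as `M → ∞`, and
`t_M/√M → π/(2√2)`. -/
theorem starWalk_search_succeeds :
    Tendsto (fun M : ℕ => starProb M (starHit M)) atTop (nhds 1) ∧
      Tendsto (fun M : ℕ => (starHit M : ℝ) / Real.sqrt M) atTop
        (nhds (Real.pi / (2 * Real.sqrt 2))) :=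
  ⟨StarAux.prob_tendsto, StarAux.hit_tendsto⟩
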